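/- Let D ∈ ℝ^{(k+1)×(k+1)} be the differentiation matrix D_{jl} = L_l'(X_j) associated with Lagrange basis polynomials {L_l} at the Gauss–Lobatto nodes −1 = X_0 < ⋯ < X_k = 1, M = diag(ω_0,…,ω_k) the diagonal matrix of quadrature weights, S = MD, and B = diag(−1,0,…,0,1). Then the summation-by-parts identity S + Sᵀ = B holds. -/

import Mathlib

open scoped BigOperators

/-- Summation-by-parts property: with `D` the Gauss–Lobatto differentiation matrix
`D j l = L_l'(X_j)`, `M = diag ω`, `S = M * D` and `B = diag (−1,0,…,0,1)`,
one has `S + Sᵀ = B`. The nodes `X` are increasing with `X 0 = −1`, `X k = 1`,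
`L_l` is the `l`-th Lagrange basis polynomial, and the weights `ω` give a quadrature
rule exact for polynomials of degree at most `2k − 1`. -/
theorem gauss_lobatto_SBP (k : ℕ) (hk : 1 ≤ k)
    (X : Fin (k + 1) → ℝ) (hX : StrictMono X)
    (hX0 : X 0 = -1) (hXk : X (Fin.last k) = 1)
    (L : Fin (k + 1) → Polynomial ℝ)
    (hLdeg : ∀ l, (L l).natDegree ≤ k)
    (hLinterp : ∀ l j, (L l).eval (X j) = if l = j then 1 else 0)
    (ω : Fin (k + 1) → ℝ)
    (hquad : ∀ P : Polynomial ℝ, P.natDegree ≤ 2 * k - 1 →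
      (∫ x in (-1 : ℝ)..1, P.eval x) = ∑ l, ω l * P.eval (X l))
    (D S B : Matrix (Fin (k + 1)) (Fin (k + 1)) ℝ)
    (hD : D = fun j l => ((L l).derivative).eval (X j))
    (hS : S = Matrix.diagonal ω * D)
    (hB : B = Matrix.diagonal (fun j =>
      if j = 0 then (-1 : ℝ) else if j = Fin.last k then 1 else 0)) :
    S + S.transpose = B := by
  have hk0 : k ≠ 0 := by omega
  have hlast0 : (Fin.last k : Fin (k+1)) ≠ 0 := by
    simp [Fin.ext_iff, Fin.last]
    omega
  ext j l
  -- key identity from quadrature + FTC applied to P = ((L j) * (L l)).derivative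
  have key : ω j * ((L l).derivative).eval (X j) + ω l * ((L j).derivative).eval (X l)
      = (if j = Fin.last k then (1:ℝ) else 0) * (if l = Fin.last k then 1 else 0)
        - (if j = 0 then (1:ℝ) else 0) * (if l = 0 then 1 else 0) := by
    set P : Polynomial ℝ := ((L j) * (L l)).derivative with hP
    have hdeg : P.natDegree ≤ 2 * k - 1 := by
      have h1 : ((L j) * (L l)).natDegree ≤ 2 * k := by
        calc ((L j) * (L l)).natDegree ≤ (L j).natDegree + (L l).natDegree :=
              Polynomial.natDegree_mul_le
          _ ≤ 2 * k := by have := hLdeg j; have := hLdeg l; omega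
      calc P.natDegree ≤ ((L j) * (L l)).natDegree - 1 :=
            Polynomial.natDegree_derivative_le _
        _ ≤ 2 * k - 1 := by omega
    have hFTC : (∫ x in (-1 : ℝ)..1, P.eval x)
        = ((L j) * (L l)).eval 1 - ((L j) * (L l)).eval (-1) := by
      apply intervalIntegral.integral_deriv_eq_sub' (fun x => ((L j) * (L l)).eval x)
      · funext x; exact Polynomial.deriv (p := (L j) * (L l))
      · intro x _; exact (Polynomial.differentiable _).differentiableAt
      · exact (Polynomial.continuous _).continuousOn
    have hsum := hquad P hdeg
    rw [hFTC] at hsum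
    have hev : ∀ i, P.eval (X i)
        = ((L j).derivative).eval (X i) * (if l = i then 1 else 0)
          + (if j = i then (1:ℝ) else 0) * ((L l).derivative).eval (X i) := by
      intro i
      rw [hP, Polynomial.derivative_mul, Polynomial.eval_add, Polynomial.eval_mul,
        Polynomial.eval_mul, hLinterp, hLinterp]
    rw [Finset.sum_congr rfl (fun i _ => by rw [hev i])] at hsum
    have hsum2 : ∑ i : Fin (k+1), ω i * (((L j).derivative).eval (X i) * (if l = i then 1 else 0)
          + (if j = i then (1:ℝ) else 0) * ((L l).derivative).eval (X i))
        = ω l * ((L j).derivative).eval (X l) + ω j * ((L l).derivative).eval (X j) := by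
      simp only [mul_add, Finset.sum_add_distrib, mul_ite, ite_mul, mul_one, mul_zero,
        one_mul, zero_mul, Finset.sum_ite_eq, Finset.sum_ite_eq', Finset.mem_univ, if_true]
    rw [hsum2] at hsum
    rw [← hX0, ← hXk, Polynomial.eval_mul, Polynomial.eval_mul,
      hLinterp, hLinterp, hLinterp, hLinterp] at hsum
    linarith
  subst hD hS hB
  simp only [Matrix.add_apply, Matrix.transpose_apply, Matrix.diagonal_mul,
    Matrix.diagonal_apply]
  erw [Matrix.diagonal_mul, Matrix.diagonal_mul]
  rw [key]
  by_cases hjl : j = l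
  · subst hjl
    by_cases h0 : j = 0
    · simp [h0, hlast0.symm, hk0]
    · by_cases hL : j = Fin.last k <;> simp [h0, hL, hk0]
  · have h1 : ¬ (j = Fin.last k ∧ l = Fin.last k) := by
      rintro ⟨a, b⟩; exact hjl (a.trans b.symm)
    have h2 : ¬ (j = 0 ∧ l = 0) := by
      rintro ⟨a, b⟩; exact hjl (a.trans b.symm)
    by_cases ha : j = Fin.last k <;> by_cases hb : l = Fin.last k <;>
      by_cases hc : j = 0 <;> by_cases hd : l = 0 <;>
      simp_all
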